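/- Let G be a group with [G'', G, G] = 1. If θ₁ and θ₂ are automorphisms of G inducing the identity on G/G'', then θ₁ and θ₂ commute: θ₁∘θ₂ = θ₂∘θ₁. -/

import Mathlib

open scoped commutatorElement

theorem stmt17 {G : Type*} [Group G]
    (h : ⁅⁅derivedSeries G 2, (⊤ : Subgroup G)⁆, (⊤ : Subgroup G)⁆ = (⊥ : Subgroup G))
    (θ₁ θ₂ : G ≃* G)
    (h₁ : ∀ g : G, θ₁ g * g⁻¹ ∈ derivedSeries G 2)
    (h₂ : ∀ g : G, θ₂ g * g⁻¹ ∈ derivedSeries G 2) :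
    ∀ g : G, θ₁ (θ₂ g) = θ₂ (θ₁ g) := by
  -- [G'', G] is central
  have hZ : ∀ a ∈ derivedSeries G 2, ∀ x y : G, Commute ⁅a, x⁆ y := by
    intro a ha x y
    have : ⁅⁅a, x⁆, y⁆ ∈ (⊥ : Subgroup G) := by
      rw [← h]
      exact Subgroup.commutator_mem_commutator
        (Subgroup.commutator_mem_commutator ha (Subgroup.mem_top x)) (Subgroup.mem_top y)
    rw [Subgroup.mem_bot, commutatorElement_eq_one_iff_commute] at this
    exact this
  -- G'' centralizes G'
  have hcen : ∀ a ∈ derivedSeries G 2, ∀ v ∈ derivedSeries G 1, Commute a v := by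
    intro a ha
    have hmul : ∀ x y : G, ⁅a, x * y⁆ = ⁅a, x⁆ * ⁅a, y⁆ := by
      intro x y
      have key : ⁅a, x * y⁆ = ⁅a, x⁆ * (x * ⁅a, y⁆ * x⁻¹) := by
        simp only [commutatorElement_def]; group
      rw [key, (hZ a ha y x).symm.eq]; group
    set f : G →* G := MonoidHom.mk' (fun u => ⁅a, u⁆) hmul with hf
    have hfa : ∀ u : G, f u = ⁅a, u⁆ := fun u => rfl
    intro v hv
    rw [← commutatorElement_eq_one_iff_commute, ← hfa]
    rw [derivedSeries_succ, Subgroup.commutator_def] at hv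
    refine Subgroup.closure_induction ?_ (map_one f) ?_ ?_ hv
    · rintro w ⟨x, -, y, -, rfl⟩
      rw [map_commutatorElement]
      exact commutatorElement_eq_one_iff_commute.mpr (hZ a ha x (f y))
    · intro x y _ _ px py
      rw [map_mul, px, py, one_mul]
    · intro x _ px
      rw [map_inv, px, inv_one]
  -- G'' ≤ G'
  have hle : derivedSeries G 2 ≤ derivedSeries G 1 := by
    rw [derivedSeries_succ G 1]
    refine Subgroup.commutator_le.mpr fun g₁ hg₁ g₂ hg₂ => ?_
    rw [commutatorElement_def]
    exact Subgroup.mul_mem _ (Subgroup.mul_mem _ (Subgroup.mul_mem _ hg₁ hg₂)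
      (Subgroup.inv_mem _ hg₁)) (Subgroup.inv_mem _ hg₂)
  -- G'' is abelian
  have hab : ∀ a ∈ derivedSeries G 2, ∀ b ∈ derivedSeries G 2, Commute a b :=
    fun a ha b hb => hcen a ha b (hle hb)
  -- θᵢ fix G'' pointwise
  have hfix : ∀ (θ : G ≃* G), (∀ g : G, θ g * g⁻¹ ∈ derivedSeries G 2) →
      ∀ a ∈ derivedSeries G 2, θ a = a := by
    intro θ hθ a ha
    have ha' : a ∈ Subgroup.closure
        {g | ∃ g₁ ∈ derivedSeries G 1, ∃ g₂ ∈ derivedSeries G 1, ⁅g₁, g₂⁆ = g} := by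
      rwa [← Subgroup.commutator_def, ← derivedSeries_succ]
    refine Subgroup.closure_induction ?_ (map_one θ) ?_ ?_ ha'
    · rintro w ⟨x, hx, y, hy, rfl⟩
      obtain ⟨c, hc, hθx⟩ : ∃ c ∈ derivedSeries G 2, θ x = c * x :=
        ⟨θ x * x⁻¹, hθ x, by group⟩
      obtain ⟨d, hd, hθy⟩ : ∃ d ∈ derivedSeries G 2, θ y = d * y :=
        ⟨θ y * y⁻¹, hθ y, by group⟩
      have hcx : Commute c x := hcen c hc x hx
      have hcy : Commute c y := hcen c hc y hy
      have hdx : Commute d x := hcen d hd x hx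
      have hdy : Commute d y := hcen d hd y hy
      have hcd : Commute c d := hab c hc d hd
      rw [map_commutatorElement, hθx, hθy, commutatorElement_def,
        commutatorElement_def, mul_inv_rev, mul_inv_rev]
      have ecw : c * (x * y * x⁻¹ * c⁻¹) = x * y * x⁻¹ := by
        rw [← mul_assoc, ((hcx.mul_right hcy).mul_right hcx.inv_right).eq,
          mul_inv_cancel_right]
      have edw : d * (x * y * x⁻¹ * y⁻¹) =  (x * y * x⁻¹ * y⁻¹) * d :=
        (((hdx.mul_right hdy).mul_right hdx.inv_right).mul_right hdy.inv_right).eq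
      calc c * x * (d * y) * (x⁻¹ * c⁻¹) * (y⁻¹ * d⁻¹)
          = c * (x * d) * y * x⁻¹ * c⁻¹ * y⁻¹ * d⁻¹ := by group
        _ = c * (d * x) * y * x⁻¹ * c⁻¹ * y⁻¹ * d⁻¹ := by rw [hdx.symm.eq]
        _ = (c * d) * (x * y * x⁻¹ * c⁻¹) * y⁻¹ * d⁻¹ := by group
        _ = (d * c) * (x * y * x⁻¹ * c⁻¹) * y⁻¹ * d⁻¹ := by rw [hcd.eq]
        _ = d * (c * (x * y * x⁻¹ * c⁻¹)) * y⁻¹ * d⁻¹ := by group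
        _ = d * (x * y * x⁻¹) * y⁻¹ * d⁻¹ := by rw [ecw]
        _ = d * (x * y * x⁻¹ * y⁻¹) * d⁻¹ := by group
        _ = x * y * x⁻¹ * y⁻¹ := by rw [edw, mul_inv_cancel_right]
    · intro x y _ _ px py
      rw [map_mul, px, py]
    · intro x _ px
      rw [map_inv, px]
  -- conclude
  intro g
  obtain ⟨a, ha, e2⟩ : ∃ a ∈ derivedSeries G 2, θ₁ g = a * g :=
    ⟨θ₁ g * g⁻¹, h₁ g, by group⟩
  obtain ⟨b, hb, e1⟩ : ∃ b ∈ derivedSeries G 2, θ₂ g = b * g :=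
    ⟨θ₂ g * g⁻¹, h₂ g, by group⟩
  rw [e1, e2, map_mul, map_mul, hfix θ₁ h₁ b hb, hfix θ₂ h₂ a ha, e1, e2,
    ← mul_assoc, ← mul_assoc, (hab a ha b hb).eq]
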